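/- Symmetry Theorem: Fix irrational α and N ∈ ℕ, and let W be the cyclic word of length N over {a,b,c} recording the gap sizes of {0α},...,{(N-1)α} (a = smallest, b = middle, c = largest of the occurring gap lengths). If W_J = c, then W_{J-k} = W_{J+k} for k = 0, ..., ℓ, where ℓ+1 is the smallest positive index such that W_{J-(ℓ+1)} = c or W_{J+(ℓ+1)} = c. -/

import Mathlib

set_option linter.unusedSectionVars false

/-- The cyclic gap after the point `{m α}` among the points `{0α}, …, {(N-1)α}` on ℝ/ℤ:
the infimum of positive circular distances from `{m α}` to the other points. -/
noncomputable def gapAt (α : ℝ) (N : ℕ) (m : ℕ) : ℝ :=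
  sInf {d : ℝ | 0 < d ∧ ∃ m' : ℕ, m' < N ∧ Int.fract ((m' : ℝ) * α - (m : ℝ) * α) = d}

open Classical in
/-- The set of distinct cyclic gap lengths of the configuration `{0α}, …, {(N-1)α}`. -/
noncomputable def gapSet (α : ℝ) (N : ℕ) : Finset ℝ :=
  (Finset.range N).image (gapAt α N)

/-- The multiset of cyclic gaps of the configuration `{0α}, …, {(N-1)α}`. -/
noncomputable def gapMult (α : ℝ) (N : ℕ) : Multiset ℝ :=
  (Multiset.range N).map (gapAt α N)

/-- Cyclic extension of the ordering permutation `u` to integer indices, mod `N`. -/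
def uc (N : ℕ) (u : ℕ → ℕ) (j : ℤ) : ℕ := u ((j % (N : ℤ)).toNat)

noncomputable def Fr (α : ℝ) (d : ℤ) : ℝ := Int.fract ((d:ℝ) * α)

section FLemmas
variable {α : ℝ} (hα : Irrational α)

lemma Fr_nonneg (d : ℤ) : 0 ≤ Fr α d := Int.fract_nonneg _
lemma Fr_lt_one (d : ℤ) : Fr α d < 1 := Int.fract_lt_one _

include hα in
lemma Fr_ne_zero {d : ℤ} (hd : d ≠ 0) : Fr α d ≠ 0 := by
  intro h
  have hirr : Irrational ((d:ℝ) * α) := hα.intCast_mul hd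
  have : (d:ℝ) * α = (⌊(d:ℝ)*α⌋ : ℝ) := by
    have := Int.fract ((d:ℝ)*α)
    unfold Fr at h
    rw [Int.fract] at h
    linarith
  exact hirr.ne_int _ this

include hα in
lemma Fr_pos {d : ℤ} (hd : d ≠ 0) : 0 < Fr α d :=
  lt_of_le_of_ne (Fr_nonneg d) (Ne.symm (Fr_ne_zero hα hd))

include hα in
lemma Fr_inj {d e : ℤ} (h : Fr α d = Fr α e) : d = e := by
  by_contra hne
  have h2 : ((d - e : ℤ):ℝ) * α = ((⌊(d:ℝ)*α⌋ - ⌊(e:ℝ)*α⌋ : ℤ) : ℝ) := by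
    unfold Fr at h
    rw [Int.fract, Int.fract] at h
    push_cast
    linarith
  have hirr : Irrational (((d - e : ℤ):ℝ) * α) := hα.intCast_mul (sub_ne_zero.mpr hne)
  exact hirr.ne_int _ h2

include hα in
lemma Fr_neg {d : ℤ} (hd : d ≠ 0) : Fr α (-d) = 1 - Fr α d := by
  unfold Fr
  push_cast
  rw [show -(d:ℝ) * α = -((d:ℝ)*α) by ring]
  rw [Int.fract_neg (Fr_ne_zero hα hd)]

lemma Fr_add (d e : ℤ) : Fr α (d+e) = Fr α d + Fr α e ∨ Fr α (d+e) = Fr α d + Fr α e - 1 := by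
  unfold Fr
  have h1 : ((d + e : ℤ):ℝ) * α = (⌊(d:ℝ)*α⌋ + ⌊(e:ℝ)*α⌋ : ℤ) + (Int.fract ((d:ℝ)*α) + Int.fract ((e:ℝ)*α)) := by
    rw [Int.fract, Int.fract]; push_cast; ring
  rw [h1, Int.fract_intCast_add]
  set s := Int.fract ((d:ℝ)*α) + Int.fract ((e:ℝ)*α) with hs
  have h0 : 0 ≤ s := add_nonneg (Int.fract_nonneg _) (Int.fract_nonneg _)
  have h2 : s < 2 := by
    have := Int.fract_lt_one ((d:ℝ)*α); have := Int.fract_lt_one ((e:ℝ)*α); linarith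
  by_cases hlt : s < 1
  · left; exact Int.fract_eq_self.mpr ⟨h0, hlt⟩
  · right
    have : Int.fract s = Int.fract (s - (1:ℤ)) := (Int.fract_sub_intCast s 1).symm
    rw [this]
    push_cast
    exact Int.fract_eq_self.mpr ⟨by linarith, by linarith⟩

end FLemmas
section KeyLemmas
variable {α : ℝ} {N a b : ℕ}
variable (hα : Irrational α) (hN : 3 ≤ N)
  (ha1 : 1 ≤ a) (haN : a < N) (hb1 : 1 ≤ b) (hbN : b < N)
  (hamin : ∀ k : ℤ, 1 ≤ k → k < N → Fr α a ≤ Fr α k)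
  (hbmax : ∀ k : ℤ, 1 ≤ k → k < N → Fr α k ≤ Fr α b)

include hα hN ha1 haN hb1 hbN hamin hbmax

lemma hab : Fr α a < Fr α b := by
  have hne : (a : ℤ) ≠ (b : ℤ) := by
    intro h
    have e1 : Fr α 1 = Fr α a := le_antisymm (h ▸ hbmax 1 le_rfl (by omega)) (hamin 1 le_rfl (by omega))
    have e2 : Fr α 2 = Fr α a := le_antisymm (h ▸ hbmax 2 one_le_two (by omega)) (hamin 2 one_le_two (by omega))
    have : (1 : ℤ) = 2 := Fr_inj hα (e1.trans e2.symm)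
    omega
  exact lt_of_le_of_ne (hamin b (by omega) (by omega)) (fun h => hne (Fr_inj hα h))

lemma key1 : ∀ e : ℤ, 1 ≤ e → e + a < N → Fr α e ≤ 1 - Fr α a := by
  intro e he1 heN
  by_contra hcon
  push_neg at hcon
  rcases Fr_add (α := α) a e with h | h
  · have := Fr_lt_one (α := α) ((a:ℤ) + e)
    linarith
  · have h2 := hamin ((a:ℤ) + e) (by omega) (by omega)
    have h3 := Fr_lt_one (α := α) e
    linarith

lemma key2 : ∀ d : ℤ, 1 ≤ d → d + b < N → 1 - Fr α b ≤ Fr α d := by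
  intro d hd1 hdN
  by_contra hcon
  push_neg at hcon
  rcases Fr_add (α := α) b d with h | h
  · have h2 := hbmax ((b:ℤ) + d) (by omega) (by omega)
    have h3 := Fr_pos hα (d := d) (by omega)
    linarith
  · have h3 := Fr_nonneg (α := α) ((b:ℤ) + d)
    have h4 : Fr α ((b:ℤ)+d) ≠ 0 := Fr_ne_zero hα (by omega)
    have h5 := Fr_pos hα (d := ((b:ℤ)+d)) (by omega)
    linarith

lemma Fab : Fr α ((a:ℤ) - b) = Fr α a + 1 - Fr α b := by
  have hne : (a : ℤ) ≠ (b : ℤ) := fun h => absurd (h ▸ hab hα hN ha1 haN hb1 hbN hamin hbmax) (lt_irrefl _)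
  have hfab := hab hα hN ha1 haN hb1 hbN hamin hbmax
  have hFnb : Fr α (-(b:ℤ)) = 1 - Fr α b := Fr_neg hα (by omega)
  rcases Fr_add (α := α) a (-(b:ℤ)) with h | h
  · rw [show (a:ℤ) + -(b:ℤ) = (a:ℤ) - b by ring] at h
    rw [h, hFnb]; ring
  · exfalso
    rw [show (a:ℤ) + -(b:ℤ) = (a:ℤ) - b by ring] at h
    rw [hFnb] at h
    have := Fr_pos hα (d := (a:ℤ) - b) (by omega)
    linarith

lemma key3 : ∀ d : ℤ, 1 ≤ d → d < a → Fr α a + (1 - Fr α b) ≤ Fr α d := by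
  intro d hd1 hda
  have hda' : Fr α a < Fr α d :=
    lt_of_le_of_ne (hamin d hd1 (by omega)) (fun h => by have := Fr_inj hα h; omega)
  have hsplit : Fr α ((a:ℤ) - d) = 1 - (Fr α d - Fr α a) := by
    have h1 : Fr α ((d:ℤ) - a) = Fr α d - Fr α a := by
      rcases Fr_add (α := α) d (-(a:ℤ)) with h | h <;>
        rw [show (d:ℤ) + -(a:ℤ) = (d:ℤ) - a by ring] at h <;>
        rw [Fr_neg hα (d := (a:ℤ)) (by omega)] at h
      · exfalso
        have := Fr_lt_one (α := α) ((d:ℤ) - a)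
        linarith
      · rw [h]; ring
    have h2 : Fr α ((a:ℤ) - d) = 1 - Fr α ((d:ℤ) - a) := by
      rw [show (a:ℤ) - d = -((d:ℤ) - a) by ring]
      exact Fr_neg hα (by omega)
    rw [h2, h1]
  have hbnd := hbmax ((a:ℤ) - d) (by omega) (by omega)
  rw [hsplit] at hbnd
  linarith

lemma key4 : ∀ e : ℤ, 1 ≤ e → e < b → Fr α a + (1 - Fr α b) ≤ 1 - Fr α e := by
  intro e he1 heb
  have heb' : Fr α e < Fr α b :=
    lt_of_le_of_ne (hbmax e he1 (by omega)) (fun h => by have := Fr_inj hα h; omega)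
  have h1 : Fr α ((b:ℤ) - e) = Fr α b - Fr α e := by
    rcases Fr_add (α := α) b (-(e:ℤ)) with h | h <;>
      rw [show (b:ℤ) + -(e:ℤ) = (b:ℤ) - e by ring] at h <;>
      rw [Fr_neg hα (d := (e:ℤ)) (by omega)] at h
    · exfalso
      have := Fr_lt_one (α := α) ((b:ℤ) - e)
      linarith
    · rw [h]; ring
  have h2 := hamin ((b:ℤ) - e) (by omega) (by omega)
  rw [h1] at h2
  linarith

end KeyLemmas

lemma fract_diff (α : ℝ) (k m : ℕ) :
    Int.fract ((k : ℝ) * α - (m : ℝ) * α) = Fr α ((k:ℤ) - m) := by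
  unfold Fr
  congr 1
  push_cast
  ring

lemma Fr_zero (α : ℝ) : Fr α 0 = 0 := by unfold Fr; norm_num

lemma gapAt_eq (α : ℝ) (hα : Irrational α) (N : ℕ) (m m' : ℕ)
    (hm' : m' < N) (hne : m' ≠ m)
    (hmin : ∀ k : ℕ, k < N → k ≠ m → Fr α ((m':ℤ) - m) ≤ Fr α ((k:ℤ) - m)) :
    gapAt α N m = Fr α ((m':ℤ) - m) ∧
      ∀ k : ℕ, k < N → Int.fract ((k : ℝ) * α - (m : ℝ) * α) = gapAt α N m → k = m' := by
  have hd0 : ((m':ℤ) - m) ≠ 0 := by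
    intro h
    exact hne (by exact_mod_cast sub_eq_zero.mp h)
  have hposv : 0 < Fr α ((m':ℤ) - m) := Fr_pos hα hd0
  have hmemS : Fr α ((m':ℤ) - m) ∈
      {d : ℝ | 0 < d ∧ ∃ k : ℕ, k < N ∧ Int.fract ((k : ℝ) * α - (m : ℝ) * α) = d} :=
    ⟨hposv, m', hm', fract_diff α m' m⟩
  have hbdd : BddBelow {d : ℝ | 0 < d ∧ ∃ k : ℕ, k < N ∧ Int.fract ((k : ℝ) * α - (m : ℝ) * α) = d} :=
    ⟨0, fun d hd => le_of_lt hd.1⟩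
  have hlb : ∀ d ∈ {d : ℝ | 0 < d ∧ ∃ k : ℕ, k < N ∧ Int.fract ((k : ℝ) * α - (m : ℝ) * α) = d},
      Fr α ((m':ℤ) - m) ≤ d := by
    rintro d ⟨hd0', k, hk, hfk⟩
    rw [fract_diff] at hfk
    by_cases hkm : k = m
    · subst hkm
      rw [sub_self, Fr_zero] at hfk
      linarith
    · rw [← hfk]
      exact hmin k hk hkm
  have hinf : gapAt α N m = Fr α ((m':ℤ) - m) :=
    le_antisymm (csInf_le hbdd hmemS) (le_csInf ⟨_, hmemS⟩ hlb)
  refine ⟨hinf, fun k hk hfk => ?_⟩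
  rw [fract_diff, hinf] at hfk
  have := Fr_inj hα hfk
  omega

def stepf (N a b m : ℕ) : ℕ := if m + a < N then m + a else if b ≤ m then m - b else m + a - b

section GapFormulas
variable {α : ℝ} {N a b : ℕ}
variable (hα : Irrational α) (hN : 3 ≤ N)
  (ha1 : 1 ≤ a) (haN : a < N) (hb1 : 1 ≤ b) (hbN : b < N)
  (hamin : ∀ k : ℤ, 1 ≤ k → k < N → Fr α a ≤ Fr α k)
  (hbmax : ∀ k : ℤ, 1 ≤ k → k < N → Fr α k ≤ Fr α b)

include hα hN ha1 haN hb1 hbN hamin hbmax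

lemma minA {m : ℕ} (hm : m + a < N) :
    ∀ k : ℕ, k < N → k ≠ m → Fr α a ≤ Fr α ((k:ℤ) - m) := by
  intro k hk hkm
  rcases lt_trichotomy ((k:ℤ) - m) 0 with hd | hd | hd
  · set e : ℤ := (m:ℤ) - k with he
    have he1 : 1 ≤ e := by omega
    have heN : e + a < N := by omega
    have h1 : Fr α ((k:ℤ) - m) = 1 - Fr α e := by
      rw [show (k:ℤ) - m = -e by omega]
      exact Fr_neg hα (by omega)
    have := key1 hα hN ha1 haN hb1 hbN hamin hbmax e he1 heN
    linarith
  · exact absurd hd (by omega)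
  · exact hamin _ (by omega) (by omega)

lemma minB {m : ℕ} (hm : b ≤ m) (hmN : m < N) :
    ∀ k : ℕ, k < N → k ≠ m → 1 - Fr α b ≤ Fr α ((k:ℤ) - m) := by
  intro k hk hkm
  rcases lt_trichotomy ((k:ℤ) - m) 0 with hd | hd | hd
  · set e : ℤ := (m:ℤ) - k with he
    have h1 : Fr α ((k:ℤ) - m) = 1 - Fr α e := by
      rw [show (k:ℤ) - m = -e by omega]
      exact Fr_neg hα (by omega)
    have h2 := hbmax e (by omega) (by omega)
    linarith
  · exact absurd hd (by omega)
  · exact key2 hα hN ha1 haN hb1 hbN hamin hbmax _ (by omega) (by omega)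

lemma minC {m : ℕ} (hm1 : N ≤ m + a) (hm2 : m < b) :
    ∀ k : ℕ, k < N → k ≠ m → Fr α a + (1 - Fr α b) ≤ Fr α ((k:ℤ) - m) := by
  intro k hk hkm
  rcases lt_trichotomy ((k:ℤ) - m) 0 with hd | hd | hd
  · set e : ℤ := (m:ℤ) - k with he
    have h1 : Fr α ((k:ℤ) - m) = 1 - Fr α e := by
      rw [show (k:ℤ) - m = -e by omega]
      exact Fr_neg hα (by omega)
    have := key4 hα hN ha1 haN hb1 hbN hamin hbmax e (by omega) (by omega)
    linarith
  · exact absurd hd (by omega)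
  · exact key3 hα hN ha1 haN hb1 hbN hamin hbmax _ (by omega) (by omega)

lemma step_spec {m : ℕ} (hm : m < N) :
    stepf N a b m < N ∧
    gapAt α N m = Fr α ((stepf N a b m : ℤ) - m) ∧
    (∀ k : ℕ, k < N → Int.fract ((k : ℝ) * α - (m : ℝ) * α) = gapAt α N m → k = stepf N a b m) := by
  have hne_ab : (a:ℤ) ≠ b := by
    intro h
    have := hab hα hN ha1 haN hb1 hbN hamin hbmax
    rw [show (a:ℕ) = b by omega] at this
    exact absurd this (lt_irrefl _)
  unfold stepf
  by_cases h1 : m + a < N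
  · simp only [if_pos h1]
    have := gapAt_eq α hα N m (m + a) h1 (by omega)
      (by intro k hk hkm
          have hrw : ((m + a : ℕ):ℤ) - m = (a:ℤ) := by push_cast; ring
          rw [hrw]
          exact minA hα hN ha1 haN hb1 hbN hamin hbmax h1 k hk hkm)
    exact ⟨h1, this.1, this.2⟩
  · by_cases h2 : b ≤ m
    · simp only [if_neg h1, if_pos h2]
      have hrw : ((m - b : ℕ):ℤ) - m = -(b:ℤ) := by
        push_cast [h2]; ring
      have hFnb : Fr α (-(b:ℤ)) = 1 - Fr α b := Fr_neg hα (by omega)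
      have := gapAt_eq α hα N m (m - b) (by omega) (by omega)
        (by intro k hk hkm
            rw [hrw, hFnb]
            exact minB hα hN ha1 haN hb1 hbN hamin hbmax h2 hm k hk hkm)
      exact ⟨by omega, this.1, this.2⟩
    · simp only [if_neg h1, if_neg h2]
      push_neg at h1 h2
      have hm2 : m < b := h2
      have hm1 : N ≤ m + a := h1
      have hlt : m + a - b < N := by omega
      have hrw : ((m + a - b : ℕ):ℤ) - m = (a:ℤ) - b := by
        have : b ≤ m + a := by omega
        push_cast [this]; ring
      have hFab := Fab hα hN ha1 haN hb1 hbN hamin hbmax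
      have := gapAt_eq α hα N m (m + a - b) hlt (by omega)
        (by intro k hk hkm
            rw [hrw, hFab]
            have := minC hα hN ha1 haN hb1 hbN hamin hbmax hm1 hm2 k hk hkm
            linarith)
      exact ⟨hlt, this.1, this.2⟩

lemma gapA {m : ℕ} (hm : m + a < N) : gapAt α N m = Fr α a := by
  have := step_spec hα hN ha1 haN hb1 hbN hamin hbmax (m := m) (by omega)
  unfold stepf at this
  rw [if_pos hm] at this
  rw [this.2.1]
  congr 1
  push_cast; ring

lemma habN : N ≤ a + b := by
  by_contra hcon
  push_neg at hcon
  rcases Fr_add (α := α) a b with h | h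
  · have h2 := hbmax ((a:ℤ) + b) (by omega) (by omega)
    have h3 := Fr_pos hα (d := (a:ℤ)) (by omega)
    linarith
  · have h2 := hamin ((a:ℤ) + b) (by omega) (by omega)
    have h3 := Fr_lt_one (α := α) b
    linarith

lemma gapB {m : ℕ} (hm : b ≤ m) (hmN : m < N) : gapAt α N m = 1 - Fr α b := by
  have := step_spec hα hN ha1 haN hb1 hbN hamin hbmax (m := m) hmN
  unfold stepf at this
  have h1 : ¬ (m + a < N) := by
    have := habN hα hN ha1 haN hb1 hbN hamin hbmax
    omega
  rw [if_neg h1, if_pos hm] at this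
  rw [this.2.1, show ((m - b:ℕ):ℤ) - m = -(b:ℤ) by push_cast [hm]; ring]
  exact Fr_neg hα (by omega)

lemma gapC {m : ℕ} (hm1 : N ≤ m + a) (hm2 : m < b) :
    gapAt α N m = Fr α a + (1 - Fr α b) := by
  have hmN : m < N := by omega
  have := step_spec hα hN ha1 haN hb1 hbN hamin hbmax (m := m) hmN
  unfold stepf at this
  rw [if_neg (by omega), if_neg (by omega)] at this
  rw [this.2.1, show ((m + a - b:ℕ):ℤ) - m = (a:ℤ) - b by push_cast [show b ≤ m + a by omega]; ring,
    Fab hα hN ha1 haN hb1 hbN hamin hbmax]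
  ring

end GapFormulas

lemma fract_sub_fract (x y : ℝ) : Int.fract (x - y) = Int.fract (Int.fract x - Int.fract y) := by
  conv_lhs => rw [show x - y = (Int.fract x - Int.fract y) + ((⌊x⌋ - ⌊y⌋ : ℤ) : ℝ) by
    rw [Int.fract, Int.fract]; push_cast; ring]
  rw [Int.fract_add_intCast]

lemma fract_of_neg {x : ℝ} (h0 : -1 ≤ x) (h1 : x < 0) : Int.fract x = x + 1 := by
  have h2 : Int.fract x = Int.fract (x + 1) := by
    rw [show x + 1 = x + ((1:ℤ):ℝ) by norm_num, Int.fract_add_intCast]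
  rw [h2, Int.fract_eq_self.mpr ⟨by linarith, by linarith⟩]

section Sorting
variable {α : ℝ} {N a b : ℕ} {u : ℕ → ℕ}
variable (hα : Irrational α) (hN : 3 ≤ N)
  (ha1 : 1 ≤ a) (haN : a < N) (hb1 : 1 ≤ b) (hbN : b < N)
  (hamin : ∀ k : ℤ, 1 ≤ k → k < N → Fr α a ≤ Fr α k)
  (hbmax : ∀ k : ℤ, 1 ≤ k → k < N → Fr α k ≤ Fr α b)
  (hbij : Set.BijOn u (Set.Iio N) (Set.Iio N))
  (hmono : StrictMonoOn (fun j => Int.fract ((u j : ℝ) * α)) (Set.Iio N))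

include hbij in
lemma u_lt {j : ℕ} (hj : j < N) : u j < N := hbij.mapsTo (Set.mem_Iio.mpr hj)

include hN hbij hmono in
lemma u_zero : u 0 = 0 := by
  obtain ⟨j0, hj0, hu0⟩ := hbij.surjOn (Set.mem_Iio.mpr (show 0 < N by omega))
  simp only [Set.mem_Iio] at hj0
  rcases Nat.eq_zero_or_pos j0 with h | h
  · exact h ▸ hu0
  · exfalso
    have := hmono (Set.mem_Iio.mpr (show 0 < N by omega)) (Set.mem_Iio.mpr hj0) h
    simp only [hu0] at this
    have h2 : Int.fract ((0:ℕ) * α : ℝ) = 0 := by norm_num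
    rw [show ((0:ℕ):ℝ) * α = 0 by norm_num] at this
    have := Int.fract_nonneg ((u 0 : ℝ) * α)
    simp only [Int.fract_zero] at *
    linarith

lemma g_eq_Fr (j : ℕ) : Int.fract ((u j : ℝ) * α) = Fr α ((u j : ℤ)) := by
  unfold Fr; norm_num

include hα hbij in
lemma g_inj {i j : ℕ} (hi : i < N) (hj : j < N)
    (h : Int.fract ((u i : ℝ) * α) = Int.fract ((u j : ℝ) * α)) : i = j := by
  rw [g_eq_Fr, g_eq_Fr] at h
  have : u i = u j := by exact_mod_cast Fr_inj hα h
  exact hbij.injOn (Set.mem_Iio.mpr hi) (Set.mem_Iio.mpr hj) this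

include hα hN ha1 haN hb1 hbN hamin hbmax hbij hmono in
lemma succ_mod {r : ℕ} (hr : r < N) : u ((r + 1) % N) = stepf N a b (u r) := by
  have hmN : u r < N := u_lt hbij hr
  obtain ⟨hsN, hgap, huniq⟩ := step_spec hα hN ha1 haN hb1 hbN hamin hbmax hmN
  set m := u r with hm
  set ms := stepf N a b m with hms
  have hmne : ms ≠ m := by
    have hne_ab : a ≠ b := by
      intro h
      have := hab hα hN ha1 haN hb1 hbN hamin hbmax
      rw [h] at this
      exact absurd this (lt_irrefl _)
    have hNab := habN hα hN ha1 haN hb1 hbN hamin hbmax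
    rw [hms]; unfold stepf
    split_ifs <;> omega
  obtain ⟨j', hj', hujs⟩ := hbij.surjOn (Set.mem_Iio.mpr hsN)
  simp only [Set.mem_Iio] at hj'
  have hj'r : j' ≠ r := fun h => hmne (by rw [← hujs, h])
  -- the value of the gap in terms of fractional parts
  have hkey : Fr α ((ms:ℤ) - m) =
      Int.fract (Int.fract ((u j' : ℝ) * α) - Int.fract ((m : ℝ) * α)) := by
    rw [← fract_sub_fract, ← fract_diff, hujs]
  have hgneq : Int.fract ((u j' : ℝ) * α) ≠ Int.fract ((u r : ℝ) * α) := by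
    intro h
    exact hj'r (g_inj hα hbij hj' hr h)
  have hfr0 : (0:ℝ) ≤ Int.fract ((u r:ℝ) * α) := Int.fract_nonneg _
  have hfr1 : Int.fract ((u r:ℝ) * α) < 1 := Int.fract_lt_one _
  have hfj0 : (0:ℝ) ≤ Int.fract ((u j':ℝ) * α) := Int.fract_nonneg _
  have hfj1 : Int.fract ((u j':ℝ) * α) < 1 := Int.fract_lt_one _
  rcases Nat.lt_or_ge (r + 1) N with hrN | hrN
  · -- interior case
    rw [Nat.mod_eq_of_lt hrN]
    have hgr : Int.fract ((u r : ℝ) * α) < Int.fract ((u (r+1) : ℝ) * α) :=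
      hmono (Set.mem_Iio.mpr hr) (Set.mem_Iio.mpr hrN) (by omega)
    have hr10 : (0:ℝ) ≤ Int.fract ((u (r+1):ℝ) * α) := Int.fract_nonneg _
    have hr11 : Int.fract ((u (r+1):ℝ) * α) < 1 := Int.fract_lt_one _
    have hd1 : Int.fract ((u (r+1) : ℝ) * α - (m : ℝ) * α) =
        Int.fract ((u (r+1) : ℝ) * α) - Int.fract ((m : ℝ) * α) := by
      rw [fract_sub_fract]
      exact Int.fract_eq_self.mpr ⟨by (try simp only [hm]); linarith, by (try simp only [hm]); linarith⟩
    have hle : gapAt α N m ≤ Int.fract ((u (r+1):ℝ) * α) - Int.fract ((m:ℝ) * α) := by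
      apply csInf_le ⟨0, fun d hd => le_of_lt hd.1⟩
      exact ⟨by (try simp only [hm]); linarith, u (r+1), u_lt hbij hrN, hd1⟩
    rcases lt_or_gt_of_ne hgneq with hlt' | hgt'
    · -- u j' is below u r : contradiction
      exfalso
      have : Fr α ((ms:ℤ) - m) =
          Int.fract ((u j' : ℝ) * α) - Int.fract ((m : ℝ) * α) + 1 := by
        rw [hkey]
        exact fract_of_neg (by (try simp only [hm]); linarith) (by (try simp only [hm]); linarith)
      rw [this] at hgap
      (try simp only [hm] at *)
      linarith
    · -- u j' is above u r
      have hfr : Fr α ((ms:ℤ) - m) =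
          Int.fract ((u j' : ℝ) * α) - Int.fract ((m : ℝ) * α) := by
        rw [hkey]
        exact Int.fract_eq_self.mpr ⟨by (try simp only [hm]); linarith, by (try simp only [hm]); linarith⟩
      have hrj' : r < j' := by
        by_contra hc
        push_neg at hc
        have : j' < r := by omega
        have := hmono (Set.mem_Iio.mpr hj') (Set.mem_Iio.mpr hr) this
        simp only at this
        linarith
      have hmon : Int.fract ((u (r+1):ℝ) * α) ≤ Int.fract ((u j':ℝ) * α) := by
        rcases Nat.eq_or_lt_of_le (show r + 1 ≤ j' by omega) with h | h
        · rw [h]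
        · exact le_of_lt (hmono (Set.mem_Iio.mpr hrN) (Set.mem_Iio.mpr hj') h)
      have heq : Int.fract ((u (r+1) : ℝ) * α - (m : ℝ) * α) = gapAt α N m := by
        rw [hd1, hgap, hfr]
        (try simp only [hm] at *)
        linarith
      exact huniq (u (r+1)) (u_lt hbij hrN) heq
  · -- wrap-around case : r = N - 1
    have hrN1 : r = N - 1 := by omega
    have hmod : r + 1 = N := by omega
    rw [hmod, Nat.mod_self]
    have hu00 : u 0 = 0 := u_zero hN hbij hmono
    rw [hu00]
    by_contra hms0
    have hms0' : ms ≠ 0 := fun h => hms0 h.symm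
    have hj'0 : j' ≠ 0 := fun h => hms0' (by rw [← hujs, h, hu00])
    have hj'lt : j' < r := by omega
    have hlt' : Int.fract ((u j' : ℝ) * α) < Int.fract ((u r : ℝ) * α) :=
      hmono (Set.mem_Iio.mpr hj') (Set.mem_Iio.mpr hr) hj'lt
    have hgj'pos : 0 < Int.fract ((u j' : ℝ) * α) := by
      rw [g_eq_Fr, hujs]
      exact Fr_pos hα (by exact_mod_cast hms0')
    have hgapval : Fr α ((ms:ℤ) - m) =
        Int.fract ((u j' : ℝ) * α) - Int.fract ((m : ℝ) * α) + 1 := by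
      rw [hkey]
      exact fract_of_neg (by (try simp only [hm]); linarith) (by (try simp only [hm]); linarith)
    -- the point 0 is a closer candidate
    have hm0 : m ≠ 0 := by
      intro h
      have : r = 0 := hbij.injOn (Set.mem_Iio.mpr hr) (Set.mem_Iio.mpr (show 0 < N by omega))
        (by rw [← hm, h, hu00])
      omega
    have hcand : Int.fract (((0:ℕ) : ℝ) * α - (m : ℝ) * α) = 1 - Int.fract ((m:ℝ) * α) := by
      rw [fract_diff, show ((0:ℕ):ℤ) - (m:ℤ) = -(m:ℤ) by push_cast; ring,
        Fr_neg hα (by exact_mod_cast hm0)]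
      norm_num [Fr]
    have hle0 : gapAt α N m ≤ 1 - Int.fract ((m:ℝ) * α) := by
      apply csInf_le ⟨0, fun d hd => le_of_lt hd.1⟩
      refine ⟨by (try simp only [hm]); linarith, 0, by omega, hcand⟩
    rw [hgap, hgapval] at hle0
    simp only [hm] at *
    linarith
end Sorting

section Cyclic
variable {N a b : ℕ} {u : ℕ → ℕ}

lemma uc_arg_lt (hN0 : 0 < N) (j : ℤ) : ((j % (N:ℤ)).toNat) < N := by
  have hN0' : (0:ℤ) < N := by exact_mod_cast hN0
  have h1 : 0 ≤ j % N := Int.emod_nonneg j (by omega)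
  have h2 : j % (N:ℤ) < N := Int.emod_lt_of_pos j hN0'
  omega

lemma uc_lt (hbij : Set.BijOn u (Set.Iio N) (Set.Iio N)) (hN0 : 0 < N) (j : ℤ) :
    uc N u j < N := u_lt hbij (uc_arg_lt hN0 j)

lemma uc_of_lt {r : ℕ} (hr : r < N) : uc N u (r:ℤ) = u r := by
  unfold uc
  rw [Int.emod_eq_of_lt (by omega) (by exact_mod_cast hr), Int.toNat_natCast]

lemma uc_succ_aux (hN0 : 0 < N) (j : ℤ) :
    ∃ r : ℕ, r < N ∧ uc N u j = u r ∧ uc N u (j + 1) = u ((r + 1) % N) := by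
  have hN0' : (0:ℤ) < N := by exact_mod_cast hN0
  refine ⟨(j % (N:ℤ)).toNat, uc_arg_lt hN0 j, rfl, ?_⟩
  unfold uc
  congr 1
  have h1 : 0 ≤ j % N := Int.emod_nonneg j (by omega)
  have hjr : j % (N:ℤ) = ((j % (N:ℤ)).toNat : ℤ) := (Int.toNat_of_nonneg h1).symm
  set r : ℕ := (j % (N:ℤ)).toNat with hrdef
  have hrN : r < N := uc_arg_lt hN0 j
  have hcast : (j + 1) % (N:ℤ) = (((r + 1) % N : ℕ) : ℤ) := by
    calc (j + 1) % (N:ℤ) = (j % N + 1 % N) % N := Int.add_emod j 1 N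
    _ = ((r:ℤ) % N + 1 % N) % N := by rw [← hjr, Int.emod_emod_of_dvd j (dvd_refl (N:ℤ))]
    _ = ((r:ℤ) + 1) % N := (Int.add_emod (r:ℤ) 1 N).symm
    _ = (((r + 1) % N : ℕ) : ℤ) := by push_cast; ring
  rw [hcast, Int.toNat_natCast]

end Cyclic

section Main
variable {α : ℝ} {N a b : ℕ} {u : ℕ → ℕ}
variable (hα : Irrational α) (hN : 3 ≤ N)
  (ha1 : 1 ≤ a) (haN : a < N) (hb1 : 1 ≤ b) (hbN : b < N)
  (hamin : ∀ k : ℤ, 1 ≤ k → k < N → Fr α a ≤ Fr α k)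
  (hbmax : ∀ k : ℤ, 1 ≤ k → k < N → Fr α k ≤ Fr α b)
  (hbij : Set.BijOn u (Set.Iio N) (Set.Iio N))
  (hmono : StrictMonoOn (fun j => Int.fract ((u j : ℝ) * α)) (Set.Iio N))

include hα hN ha1 haN hb1 hbN hamin hbmax hbij hmono in
lemma uc_step (j : ℤ) : uc N u (j + 1) = stepf N a b (uc N u j) := by
  obtain ⟨r, hrN, h1, h2⟩ := uc_succ_aux (u := u) (show 0 < N by omega) j
  rw [h1, h2]
  exact succ_mod hα hN ha1 haN hb1 hbN hamin hbmax hbij hmono hrN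

include hα hN ha1 haN hb1 hbN hamin hbmax in
lemma gap_cases {m : ℕ} (hm : m < N) :
    (m + a < N ∧ gapAt α N m = Fr α a) ∨
    (N ≤ m + a ∧ b ≤ m ∧ gapAt α N m = 1 - Fr α b) ∨
    (N ≤ m + a ∧ m < b ∧ gapAt α N m = Fr α a + (1 - Fr α b)) := by
  have hNab := habN hα hN ha1 haN hb1 hbN hamin hbmax
  by_cases h1 : m + a < N
  · exact Or.inl ⟨h1, gapA hα hN ha1 haN hb1 hbN hamin hbmax h1⟩
  · by_cases h2 : b ≤ m
    · exact Or.inr (Or.inl ⟨by omega, h2, gapB hα hN ha1 haN hb1 hbN hamin hbmax h2 hm⟩)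
    · exact Or.inr (Or.inr ⟨by omega, by omega,
        gapC hα hN ha1 haN hb1 hbN hamin hbmax (by omega) (by omega)⟩)

end Main

theorem symmetry_theorem (α : ℝ) (hα : Irrational α) (N : ℕ)
    (u : ℕ → ℕ) (hbij : Set.BijOn u (Set.Iio N) (Set.Iio N))
    (hmono : StrictMonoOn (fun j => Int.fract ((u j : ℝ) * α)) (Set.Iio N))
    (h3 : (gapSet α N).card = 3)
    (J : ℕ) (hJ : J < N)
    (hmax : ∀ m < N, gapAt α N m ≤ gapAt α N (u J))
    (ℓ : ℕ)
    (hlt : ∀ i : ℕ, 1 ≤ i → i ≤ ℓ →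
      gapAt α N (uc N u ((J : ℤ) - (i : ℤ))) ≠ gapAt α N (u J) ∧
      gapAt α N (uc N u ((J : ℤ) + (i : ℤ))) ≠ gapAt α N (u J))
    (hstop : gapAt α N (uc N u ((J : ℤ) - ((ℓ : ℤ) + 1))) = gapAt α N (u J) ∨
      gapAt α N (uc N u ((J : ℤ) + ((ℓ : ℤ) + 1))) = gapAt α N (u J)) :
    ∀ k : ℕ, k ≤ ℓ →
      gapAt α N (uc N u ((J : ℤ) - (k : ℤ))) =
        gapAt α N (uc N u ((J : ℤ) + (k : ℤ))) := by
  -- `N ≥ 3`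
  have hN : 3 ≤ N := by
    have h1 : (gapSet α N).card ≤ N := by
      have := Finset.card_image_le (s := Finset.range N) (f := gapAt α N)
      simpa [gapSet] using this
    omega
  -- obtain the minimizing and maximizing indices `a`, `b`
  obtain ⟨a, hamem, hamin0⟩ := (Finset.Icc 1 (N-1)).exists_min_image
    (fun k : ℕ => Fr α (k:ℤ)) ⟨1, Finset.mem_Icc.mpr ⟨le_rfl, by omega⟩⟩
  obtain ⟨b, hbmem, hbmax0⟩ := (Finset.Icc 1 (N-1)).exists_max_image
    (fun k : ℕ => Fr α (k:ℤ)) ⟨1, Finset.mem_Icc.mpr ⟨le_rfl, by omega⟩⟩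
  rw [Finset.mem_Icc] at hamem hbmem
  have ha1 : 1 ≤ a := hamem.1
  have haN : a < N := by omega
  have hb1 : 1 ≤ b := hbmem.1
  have hbN : b < N := by omega
  have hamin : ∀ k : ℤ, 1 ≤ k → k < N → Fr α a ≤ Fr α k := by
    intro k h1 h2
    have h4 := hamin0 k.toNat (Finset.mem_Icc.mpr ⟨by omega, by omega⟩)
    simpa [Int.toNat_of_nonneg (show (0:ℤ) ≤ k by omega)] using h4
  have hbmax : ∀ k : ℤ, 1 ≤ k → k < N → Fr α k ≤ Fr α b := by
    intro k h1 h2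
    have h4 := hbmax0 k.toNat (Finset.mem_Icc.mpr ⟨by omega, by omega⟩)
    simpa [Int.toNat_of_nonneg (show (0:ℤ) ≤ k by omega)] using h4
  set Aval := Fr α a with hAval
  set Bval := 1 - Fr α b with hBval
  have hApos : 0 < Aval := Fr_pos hα (by omega)
  have hBpos : 0 < Bval := by
    have := Fr_lt_one (α := α) (b:ℤ); rw [hBval]; linarith
  have gapcases : ∀ m : ℕ, m < N →
      (m + a < N ∧ gapAt α N m = Aval) ∨
      (N ≤ m + a ∧ b ≤ m ∧ gapAt α N m = Bval) ∨
      (N ≤ m + a ∧ m < b ∧ gapAt α N m = Aval + Bval) := fun m hm =>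
    gap_cases hα hN ha1 haN hb1 hbN hamin hbmax hm
  -- the largest gap value is attained
  have hCex : ∃ m : ℕ, m < N ∧ gapAt α N m = Aval + Bval := by
    by_contra hcon
    push_neg at hcon
    have hsub : gapSet α N ⊆ {Aval, Bval} := by
      intro x hx
      simp only [gapSet, Finset.mem_image, Finset.mem_range] at hx
      obtain ⟨m, hm, rfl⟩ := hx
      rcases gapcases m hm with ⟨_, h⟩ | ⟨_, _, h⟩ | ⟨_, _, h⟩
      · simp [h]
      · simp [h]
      · exact absurd h (hcon m hm)
    have h2 : ({Aval, Bval} : Finset ℝ).card ≤ 2 := by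
      apply le_trans (Finset.card_insert_le _ _); simp
    have := Finset.card_le_card hsub
    omega
  have huJ : u J < N := u_lt hbij hJ
  -- the gap at `J` is the largest gap, of type `c`
  have hgJ : N ≤ u J + a ∧ u J < b ∧ gapAt α N (u J) = Aval + Bval := by
    obtain ⟨m, hm, hc⟩ := hCex
    have hmle := hmax m hm
    rw [hc] at hmle
    rcases gapcases (u J) huJ with ⟨_, h⟩ | ⟨_, _, h⟩ | ⟨h1, h2, h⟩
    · rw [h] at hmle; linarith
    · rw [h] at hmle; linarith
    · exact ⟨h1, h2, h⟩
  have hucJ : uc N u (J:ℤ) = u J := uc_of_lt hJ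
  have hstep : ∀ j : ℤ, uc N u (j + 1) = stepf N a b (uc N u j) := fun j =>
    uc_step hα hN ha1 haN hb1 hbN hamin hbmax hbij hmono j
  have huclt : ∀ j : ℤ, uc N u j < N := fun j => uc_lt hbij (by omega) j
  -- the main induction
  have main : ∀ k : ℕ, k ≤ ℓ →
      ((uc N u ((J:ℤ) + (k:ℤ) + 1) : ℤ) + (uc N u ((J:ℤ) - (k:ℤ)) : ℤ)
        = 2 * (u J : ℤ) + (a:ℤ) - (b:ℤ)) ∧
      gapAt α N (uc N u ((J:ℤ) - (k:ℤ))) = gapAt α N (uc N u ((J:ℤ) + (k:ℤ))) := by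
    intro k
    induction k with
    | zero =>
      intro _
      constructor
      · have h1 : uc N u ((J:ℤ) + (0:ℕ) + 1) = stepf N a b (uc N u ((J:ℤ) + (0:ℕ))) :=
          hstep ((J:ℤ) + (0:ℕ))
        rw [h1, show (J:ℤ) + ((0:ℕ):ℤ) = (J:ℤ) by norm_num,
          show (J:ℤ) - ((0:ℕ):ℤ) = (J:ℤ) by norm_num, hucJ]
        unfold stepf
        rw [if_neg (by omega), if_neg (by omega)]
        have hble : b ≤ u J + a := by omega
        push_cast [hble]
        ring
      · rw [show (J:ℤ) - ((0:ℕ):ℤ) = (J:ℤ) + ((0:ℕ):ℤ) by norm_num]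
    | succ k ih =>
      intro hk1
      obtain ⟨hsum, hgapeq⟩ := ih (by omega)
      have hcst : (((k:ℕ)+1 : ℕ):ℤ) = (k:ℤ) + 1 := by push_cast; ring
      rw [hcst]
      -- abbreviations
      have hnotC := hlt (k+1) (by omega) hk1
      rw [show ((k+1 : ℕ):ℤ) = (k:ℤ)+1 from hcst] at hnotC
      set n' := uc N u ((J:ℤ) - ((k:ℤ)+1)) with hn'
      set p := uc N u ((J:ℤ) + ((k:ℤ)+1)) with hp
      have hn'N : n' < N := huclt _
      have hpN : p < N := huclt _
      have hstep_n : uc N u ((J:ℤ) - (k:ℤ)) = stepf N a b n' := by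
        rw [hn', ← hstep ((J:ℤ) - ((k:ℤ)+1)),
          show (J:ℤ) - ((k:ℤ)+1) + 1 = (J:ℤ) - (k:ℤ) by ring]
      have hstep_p : uc N u ((J:ℤ) + ((k:ℤ)+1) + 1) = stepf N a b p := by
        rw [hp, ← hstep ((J:ℤ) + ((k:ℤ)+1))]
      have hsum' : (p:ℤ) + (uc N u ((J:ℤ) - (k:ℤ)) : ℤ) = 2 * (u J:ℤ) + a - b := by
        rw [hp, show (J:ℤ) + ((k:ℤ)+1) = (J:ℤ) + (k:ℤ) + 1 by ring]
        exact hsum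
      have hgJ1 : N ≤ u J + a := hgJ.1
      have hgJ2 : u J < b := hgJ.2.1
      rcases gapcases n' hn'N with ⟨hA, hvA⟩ | ⟨hB0, hB, hvB⟩ | ⟨hC1, hC2, hvC⟩
      · -- predecessor gap is of type a
        have hsn : (uc N u ((J:ℤ) - (k:ℤ)) : ℤ) = (n':ℤ) + a := by
          rw [hstep_n]
          unfold stepf
          rw [if_pos hA]
          push_cast; ring
        rw [hsn] at hsum'
        rcases gapcases p hpN with ⟨hpA, hpvA⟩ | ⟨hpB0, hpB, hpvB⟩ | ⟨hpC1, hpC2, hpvC⟩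
        · refine ⟨?_, by rw [hvA, hpvA]⟩
          have hq : (uc N u ((J:ℤ) + ((k:ℤ)+1) + 1) : ℤ) = (p:ℤ) + a := by
            rw [hstep_p]
            unfold stepf
            rw [if_pos hpA]
            push_cast; ring
          rw [hq]
          omega
        · exfalso
          omega
        · exact absurd (hpvC.trans hgJ.2.2.symm) hnotC.2
      · -- predecessor gap is of type b
        have hsn : (uc N u ((J:ℤ) - (k:ℤ)) : ℤ) = (n':ℤ) - b := by
          rw [hstep_n]
          unfold stepf
          rw [if_neg (by omega), if_pos hB]
          rw [Nat.cast_sub hB]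
        rw [hsn] at hsum'
        rcases gapcases p hpN with ⟨hpA, hpvA⟩ | ⟨hpB0, hpB, hpvB⟩ | ⟨hpC1, hpC2, hpvC⟩
        · exfalso
          omega
        · refine ⟨?_, by rw [hvB, hpvB]⟩
          have hq : (uc N u ((J:ℤ) + ((k:ℤ)+1) + 1) : ℤ) = (p:ℤ) - b := by
            rw [hstep_p]
            unfold stepf
            rw [if_neg (by omega), if_pos hpB]
            rw [Nat.cast_sub hpB]
          rw [hq]
          omega
        · exact absurd (hpvC.trans hgJ.2.2.symm) hnotC.2
      · -- predecessor gap of type c : impossible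
        exact absurd (hvC.trans hgJ.2.2.symm) hnotC.1
  intro k hk
  exact (main k hk).2
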